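/- Let α be a bijection (∐_i {x_{i1}, …, x_{i m_i}}) ∐ {z} → (∐_i {x_i}) ∐ {z_1, …, z_l} with l = (∑_i m_i) - k + 1, interpreted as a graph on nodes N_1, …, N_k by joining each input to its image. Then the resulting graph contains a closed loop if and only if there exists a nonempty sequence of indices t_1, …, t_n ∈ {1, …, k} such that for each 2 ≤ j ≤ n, α(x_{t_j b_j}) = x_{t_{j-1}} for some 1 ≤ b_j ≤ m_{t_j}, and α(x_{t_1 b_1}) = x_{t_n} for some 1 ≤ b_1 ≤ m_{t_1}. -/

import Mathlib

namespace KM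

/-! ### Shapes and variable sets (Kelly–Mac Lane) -/

/-- Shapes: formal objects built from `1`, `I`, `⊗` and `[ , ]`. -/
inductive Shape : Type where
  | unit : Shape                     -- I
  | one : Shape                      -- 1
  | tensor : Shape → Shape → Shape   -- ⊗
  | hom : Shape → Shape → Shape      -- [ , ]

/-- The variable set of a shape, as a list of signs (`true` = `+`, `false` = `−`). -/
def vset : Shape → List Bool
  | .unit => []
  | .one => [true]
  | .tensor T S => vset T ++ vset S
  | .hom T S => (vset T).map not ++ vset S

/-- `1 ⊗ ⋯ ⊗ 1` (m copies), with `1^{⊗0} = I`. -/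
def onePow : ℕ → Shape
  | 0 => .unit
  | n + 1 => .tensor (onePow n) .one

/-- `X_m = [1^{⊗m}, 1]`. -/
def Xm (m : ℕ) : Shape := .hom (onePow m) .one

/-- The type of variables (occurrences of `1`) of a shape. -/
def VarsOf : Shape → Type
  | .unit => Empty
  | .one => Unit
  | .tensor T S => VarsOf T ⊕ VarsOf S
  | .hom T S => VarsOf T ⊕ VarsOf S

/-- The variance (sign) of a variable of a shape. -/
def sgn : (T : Shape) → VarsOf T → Bool
  | .unit, x => x.elim
  | .one, _ => true
  | .tensor T S, x => Sum.elim (sgn T) (sgn S) x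
  | .hom T S, x => Sum.elim (fun v => ! sgn T v) (sgn S) x

/-- The variance of a variable in the twisted sum `v(T)^op ++ v(S)`. -/
def tsgn (T S : Shape) (x : VarsOf T ⊕ VarsOf S) : Bool :=
  Sum.elim (fun v => ! sgn T v) (sgn S) x

/-- A Kelly–Mac Lane graph `T → S`: a fixed-point free pairing (involution)
of the variables in the twisted sum `v(T)^op ++ v(S)` matching `+`'s with `−`'s. -/
structure KMGraph (T S : Shape) : Type where
  mate : VarsOf T ⊕ VarsOf S → VarsOf T ⊕ VarsOf S
  invol : ∀ x, mate (mate x) = x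
  nofix : ∀ x, mate x ≠ x
  sflip : ∀ x, tsgn T S (mate x) = ! tsgn T S x

/-- The identity graph `1 : T → T`. -/
def idG (T : Shape) : KMGraph T T where
  mate := Sum.elim Sum.inr Sum.inl
  invol := by rintro (v | v) <;> rfl
  nofix := by rintro (v | v) h <;> simp at h
  sflip := by rintro (v | v) <;> simp [tsgn]

/-- Associativity `a : (T ⊗ S) ⊗ R → T ⊗ (S ⊗ R)`. -/
def aG (T S R : Shape) : KMGraph (.tensor (.tensor T S) R) (.tensor T (.tensor S R)) where
  mate := fun x => match x with
    | .inl (.inl (.inl t)) => .inr (.inl t)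
    | .inl (.inl (.inr s)) => .inr (.inr (.inl s))
    | .inl (.inr r) => .inr (.inr (.inr r))
    | .inr (.inl t) => .inl (.inl (.inl t))
    | .inr (.inr (.inl s)) => .inl (.inl (.inr s))
    | .inr (.inr (.inr r)) => .inl (.inr r)
  invol := by rintro (((t | s) | r) | (t | (s | r))) <;> rfl
  nofix := by rintro (((t | s) | r) | (t | (s | r))) h <;> simp at h
  sflip := by rintro (((t | s) | r) | (t | (s | r))) <;> simp [tsgn, sgn, Sum.elim]

/-- Inverse associativity `a⁻¹ : T ⊗ (S ⊗ R) → (T ⊗ S) ⊗ R`. -/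
def aInvG (T S R : Shape) : KMGraph (.tensor T (.tensor S R)) (.tensor (.tensor T S) R) where
  mate := fun x => match x with
    | .inl (.inl t) => .inr (.inl (.inl t))
    | .inl (.inr (.inl s)) => .inr (.inl (.inr s))
    | .inl (.inr (.inr r)) => .inr (.inr r)
    | .inr (.inl (.inl t)) => .inl (.inl t)
    | .inr (.inl (.inr s)) => .inl (.inr (.inl s))
    | .inr (.inr r) => .inl (.inr (.inr r))
  invol := by rintro ((t | (s | r)) | ((t | s) | r)) <;> rfl
  nofix := by rintro ((t | (s | r)) | ((t | s) | r)) h <;> simp at h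
  sflip := by rintro ((t | (s | r)) | ((t | s) | r)) <;> simp [tsgn, sgn, Sum.elim]

/-- Unit `b : T ⊗ I → T`. -/
def bG (T : Shape) : KMGraph (.tensor T .unit) T where
  mate := fun x => match x with
    | .inl (.inl t) => .inr t
    | .inl (.inr e) => e.elim
    | .inr t => .inl (.inl t)
  invol := by rintro ((t | e) | t) <;> first | exact e.elim | rfl
  nofix := by rintro ((t | e) | t) h <;> first | exact e.elim | simp at h
  sflip := by rintro ((t | e) | t) <;> first | exact e.elim | simp [tsgn, sgn, Sum.elim]

/-- Inverse unit `b⁻¹ : T → T ⊗ I`. -/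
def bInvG (T : Shape) : KMGraph T (.tensor T .unit) where
  mate := fun x => match x with
    | .inl t => .inr (.inl t)
    | .inr (.inl t) => .inl t
    | .inr (.inr e) => e.elim
  invol := by rintro (t | (t | e)) <;> first | exact e.elim | rfl
  nofix := by rintro (t | (t | e)) h <;> first | exact e.elim | simp at h
  sflip := by rintro (t | (t | e)) <;> first | exact e.elim | simp [tsgn, sgn, Sum.elim]

/-- Symmetry `c : T ⊗ S → S ⊗ T`. -/
def cG (T S : Shape) : KMGraph (.tensor T S) (.tensor S T) where
  mate := fun x => match x with
    | .inl (.inl t) => .inr (.inr t)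
    | .inl (.inr s) => .inr (.inl s)
    | .inr (.inl s) => .inl (.inr s)
    | .inr (.inr t) => .inl (.inl t)
  invol := by rintro ((t | s) | (s | t)) <;> rfl
  nofix := by rintro ((t | s) | (s | t)) h <;> simp at h
  sflip := by rintro ((t | s) | (s | t)) <;> simp [tsgn, sgn, Sum.elim]

/-- `d : T → [S, T ⊗ S]`. -/
def dG (T S : Shape) : KMGraph T (.hom S (.tensor T S)) where
  mate := fun x => match x with
    | .inl t => .inr (.inr (.inl t))
    | .inr (.inl s) => .inr (.inr (.inr s))
    | .inr (.inr (.inl t)) => .inl t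
    | .inr (.inr (.inr s)) => .inr (.inl s)
  invol := by rintro (t | (s | (t | s))) <;> rfl
  nofix := by rintro (t | (s | (t | s))) h <;> simp [VarsOf] at h
  sflip := by rintro (t | (s | (t | s))) <;> simp [tsgn, sgn, Sum.elim]

/-- `e : [T, S] ⊗ T → S`. -/
def eG (T S : Shape) : KMGraph (.tensor (.hom T S) T) S where
  mate := fun x => match x with
    | .inl (.inl (.inl t)) => .inl (.inr t)
    | .inl (.inl (.inr s)) => .inr s
    | .inl (.inr t) => .inl (.inl (.inl t))
    | .inr s => .inl (.inl (.inr s))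
  invol := by rintro (((t | s) | t) | s) <;> rfl
  nofix := by rintro (((t | s) | t) | s) h <;> simp [VarsOf] at h
  sflip := by rintro (((t | s) | t) | s) <;> simp [tsgn, sgn, Sum.elim]


section TensorHom
variable {T T' S S' : Shape}

/-- relabelling of the variables of `f : T → T'` into those of `T ⊗ S → T' ⊗ S'`. -/
def rlf (T T' S S' : Shape) : VarsOf T ⊕ VarsOf T' → VarsOf (.tensor T S) ⊕ VarsOf (.tensor T' S') :=
  Sum.elim (fun a => .inl (.inl a)) (fun a => .inr (.inl a))

/-- relabelling of the variables of `g : S → S'` into those of `T ⊗ S → T' ⊗ S'`. -/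
def rlg (T T' S S' : Shape) : VarsOf S ⊕ VarsOf S' → VarsOf (.tensor T S) ⊕ VarsOf (.tensor T' S') :=
  Sum.elim (fun a => .inl (.inr a)) (fun a => .inr (.inr a))

def tmate (f : KMGraph T T') (g : KMGraph S S') :
    VarsOf (.tensor T S) ⊕ VarsOf (.tensor T' S') → VarsOf (.tensor T S) ⊕ VarsOf (.tensor T' S')
  | .inl (.inl t) => rlf T T' S S' (f.mate (.inl t))
  | .inl (.inr s) => rlg T T' S S' (g.mate (.inl s))
  | .inr (.inl t') => rlf T T' S S' (f.mate (.inr t'))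
  | .inr (.inr s') => rlg T T' S S' (g.mate (.inr s'))

lemma tmate_rlf (f : KMGraph T T') (g : KMGraph S S') (z : VarsOf T ⊕ VarsOf T') :
    tmate f g (rlf T T' S S' z) = rlf T T' S S' (f.mate z) := by cases z <;> rfl

lemma tmate_rlg (f : KMGraph T T') (g : KMGraph S S') (z : VarsOf S ⊕ VarsOf S') :
    tmate f g (rlg T T' S S' z) = rlg T T' S S' (g.mate z) := by cases z <;> rfl

lemma rlf_inj : Function.Injective (rlf T T' S S') := by
  rintro (a | a) (b | b) h <;> simp [rlf] at h <;> cases h <;> rfl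

lemma rlg_inj : Function.Injective (rlg T T' S S') := by
  rintro (a | a) (b | b) h <;> simp [rlg] at h <;> cases h <;> rfl

lemma tsgn_rlf (z : VarsOf T ⊕ VarsOf T') :
    tsgn (.tensor T S) (.tensor T' S') (rlf T T' S S' z) = tsgn T T' z := by
  cases z <;> rfl

lemma tsgn_rlg (z : VarsOf S ⊕ VarsOf S') :
    tsgn (.tensor T S) (.tensor T' S') (rlg T T' S S' z) = tsgn S S' z := by
  cases z <;> rfl

/-- Tensor product of graphs `f ⊗ g : T ⊗ S → T' ⊗ S'`. -/
def tensorG (f : KMGraph T T') (g : KMGraph S S') : KMGraph (.tensor T S) (.tensor T' S') where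
  mate := tmate f g
  invol := by
    rintro ((t | s) | (t' | s'))
    · show tmate f g (rlf T T' S S' (f.mate (.inl t))) = _
      rw [tmate_rlf, f.invol]; rfl
    · show tmate f g (rlg T T' S S' (g.mate (.inl s))) = _
      rw [tmate_rlg, g.invol]; rfl
    · show tmate f g (rlf T T' S S' (f.mate (.inr t'))) = _
      rw [tmate_rlf, f.invol]; rfl
    · show tmate f g (rlg T T' S S' (g.mate (.inr s'))) = _
      rw [tmate_rlg, g.invol]; rfl
  nofix := by
    rintro ((t | s) | (t' | s')) h
    · exact f.nofix (.inl t) (rlf_inj h)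
    · exact g.nofix (.inl s) (rlg_inj h)
    · exact f.nofix (.inr t') (rlf_inj h)
    · exact g.nofix (.inr s') (rlg_inj h)
  sflip := by
    rintro ((t | s) | (t' | s'))
    · show tsgn _ _ (rlf T T' S S' (f.mate (.inl t))) = _
      rw [tsgn_rlf, f.sflip]; rfl
    · show tsgn _ _ (rlg T T' S S' (g.mate (.inl s))) = _
      rw [tsgn_rlg, g.sflip]; rfl
    · show tsgn _ _ (rlf T T' S S' (f.mate (.inr t'))) = _
      rw [tsgn_rlf, f.sflip]; rfl
    · show tsgn _ _ (rlg T T' S S' (g.mate (.inr s'))) = _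
      rw [tsgn_rlg, g.sflip]; rfl

/-- relabelling of the variables of `f : T → T'` into those of `[T', S] → [T, S']`. -/
def hlf (T T' S S' : Shape) : VarsOf T ⊕ VarsOf T' → VarsOf (.hom T' S) ⊕ VarsOf (.hom T S') :=
  Sum.elim (fun a => .inr (.inl a)) (fun a => .inl (.inl a))

/-- relabelling of the variables of `g : S → S'` into those of `[T', S] → [T, S']`. -/
def hlg (T T' S S' : Shape) : VarsOf S ⊕ VarsOf S' → VarsOf (.hom T' S) ⊕ VarsOf (.hom T S') :=
  Sum.elim (fun a => .inl (.inr a)) (fun a => .inr (.inr a))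

def hmate (f : KMGraph T T') (g : KMGraph S S') :
    VarsOf (.hom T' S) ⊕ VarsOf (.hom T S') → VarsOf (.hom T' S) ⊕ VarsOf (.hom T S')
  | .inl (.inl t') => hlf T T' S S' (f.mate (.inr t'))
  | .inl (.inr s) => hlg T T' S S' (g.mate (.inl s))
  | .inr (.inl t) => hlf T T' S S' (f.mate (.inl t))
  | .inr (.inr s') => hlg T T' S S' (g.mate (.inr s'))

lemma hmate_hlf (f : KMGraph T T') (g : KMGraph S S') (z : VarsOf T ⊕ VarsOf T') :
    hmate f g (hlf T T' S S' z) = hlf T T' S S' (f.mate z) := by cases z <;> rfl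

lemma hmate_hlg (f : KMGraph T T') (g : KMGraph S S') (z : VarsOf S ⊕ VarsOf S') :
    hmate f g (hlg T T' S S' z) = hlg T T' S S' (g.mate z) := by cases z <;> rfl

lemma hlf_inj : Function.Injective (hlf T T' S S') := by
  rintro (a | a) (b | b) h <;> simp [hlf] at h <;> cases h <;> rfl

lemma hlg_inj : Function.Injective (hlg T T' S S') := by
  rintro (a | a) (b | b) h <;> simp [hlg] at h <;> cases h <;> rfl

lemma tsgn_hlf (z : VarsOf T ⊕ VarsOf T') :
    tsgn (.hom T' S) (.hom T S') (hlf T T' S S' z) = tsgn T T' z := by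
  cases z <;> simp [tsgn, sgn, hlf, Sum.elim]

lemma tsgn_hlg (z : VarsOf S ⊕ VarsOf S') :
    tsgn (.hom T' S) (.hom T S') (hlg T T' S S' z) = tsgn S S' z := by
  cases z <;> simp [tsgn, sgn, hlg, Sum.elim]

/-- `[f, g] : [T', S] → [T, S']` for graphs `f : T → T'`, `g : S → S'`. -/
def homG (f : KMGraph T T') (g : KMGraph S S') : KMGraph (.hom T' S) (.hom T S') where
  mate := hmate f g
  invol := by
    rintro ((t' | s) | (t | s'))
    · show hmate f g (hlf T T' S S' (f.mate (.inr t'))) = _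
      rw [hmate_hlf, f.invol]; rfl
    · show hmate f g (hlg T T' S S' (g.mate (.inl s))) = _
      rw [hmate_hlg, g.invol]; rfl
    · show hmate f g (hlf T T' S S' (f.mate (.inl t))) = _
      rw [hmate_hlf, f.invol]; rfl
    · show hmate f g (hlg T T' S S' (g.mate (.inr s'))) = _
      rw [hmate_hlg, g.invol]; rfl
  nofix := by
    rintro ((t' | s) | (t | s')) h
    · exact f.nofix (.inr t') (hlf_inj h)
    · exact g.nofix (.inl s) (hlg_inj h)
    · exact f.nofix (.inl t) (hlf_inj h)
    · exact g.nofix (.inr s') (hlg_inj h)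
  sflip := by
    rintro ((t' | s) | (t | s'))
    · show tsgn _ _ (hlf T T' S S' (f.mate (.inr t'))) = _
      rw [tsgn_hlf, f.sflip]
      show _ = ! tsgn (.hom T' S) (.hom T S') (hlf T T' S S' (.inr t'))
      rw [tsgn_hlf]
    · show tsgn _ _ (hlg T T' S S' (g.mate (.inl s))) = _
      rw [tsgn_hlg, g.sflip]
      show _ = ! tsgn (.hom T' S) (.hom T S') (hlg T T' S S' (.inl s))
      rw [tsgn_hlg]
    · show tsgn _ _ (hlf T T' S S' (f.mate (.inl t))) = _
      rw [tsgn_hlf, f.sflip]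
      show _ = ! tsgn (.hom T' S) (.hom T S') (hlf T T' S S' (.inl t))
      rw [tsgn_hlf]
    · show tsgn _ _ (hlg T T' S S' (g.mate (.inr s'))) = _
      rw [tsgn_hlg, g.sflip]
      show _ = ! tsgn (.hom T' S) (.hom T S') (hlg T T' S S' (.inr s'))
      rw [tsgn_hlg]

end TensorHom

/-! ### Composition of graphs, relationally -/

section Comp
variable (T S R : Shape)

/-- Inclusion of the variables of `T → S` into the variables of a composable pair. -/
def eTS : VarsOf T ⊕ VarsOf S → VarsOf T ⊕ VarsOf S ⊕ VarsOf R :=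
  Sum.elim Sum.inl (fun s => Sum.inr (Sum.inl s))

def eSR : VarsOf S ⊕ VarsOf R → VarsOf T ⊕ VarsOf S ⊕ VarsOf R :=
  Sum.elim (fun s => Sum.inr (Sum.inl s)) (fun r => Sum.inr (Sum.inr r))

def eTR : VarsOf T ⊕ VarsOf R → VarsOf T ⊕ VarsOf S ⊕ VarsOf R :=
  Sum.elim Sum.inl (fun r => Sum.inr (Sum.inr r))

variable {T S R}

/-- One step along the pairings of `f` or of `g`. -/
def Step (f : KMGraph T S) (g : KMGraph S R) (x y : VarsOf T ⊕ VarsOf S ⊕ VarsOf R) : Prop :=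
  (∃ u, eTS T S R u = x ∧ eTS T S R (f.mate u) = y) ∨
  (∃ u, eSR T S R u = x ∧ eSR T S R (g.mate u) = y)

/-- Two variables are connected if they are joined by an alternating path. -/
def Connected (f : KMGraph T S) (g : KMGraph S R) :
    (VarsOf T ⊕ VarsOf S ⊕ VarsOf R) → (VarsOf T ⊕ VarsOf S ⊕ VarsOf R) → Prop :=
  Relation.ReflTransGen (Step f g)

/-- `h` is the composite graph `g ∘ f`: it pairs `u` with `v` exactly when they are
joined by an alternating path through the variables of `S`. -/
def IsComposite (f : KMGraph T S) (g : KMGraph S R) (h : KMGraph T R) : Prop :=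
  ∀ u, Connected f g (eTR T S R u) (eTR T S R (h.mate u))

/-- `f` and `g` are compatible: composing them gives no closed loops, i.e. every
variable of `S` is linked to a variable of `T` or `R`. -/
def Compatible (f : KMGraph T S) (g : KMGraph S R) : Prop :=
  ∀ s : VarsOf S, ∃ u, Connected f g (Sum.inr (Sum.inl s)) (eTR T S R u)

end Comp

/-- The allowable morphisms: the smallest class of graphs containing `1, a, a⁻¹, b, b⁻¹, c, d, e`
and closed under `⊗`, `[ , ]` and composition. -/
inductive Allowable : {T S : Shape} → KMGraph T S → Prop
  | id (T : Shape) : Allowable (idG T)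
  | assoc (T S R : Shape) : Allowable (aG T S R)
  | assocInv (T S R : Shape) : Allowable (aInvG T S R)
  | unit (T : Shape) : Allowable (bG T)
  | unitInv (T : Shape) : Allowable (bInvG T)
  | braid (T S : Shape) : Allowable (cG T S)
  | dgen (T S : Shape) : Allowable (dG T S)
  | egen (T S : Shape) : Allowable (eG T S)
  | tensor {T T' S S' : Shape} {f : KMGraph T T'} {g : KMGraph S S'} :
      Allowable f → Allowable g → Allowable (tensorG f g)
  | homc {T T' S S' : Shape} {f : KMGraph T T'} {g : KMGraph S S'} :
      Allowable f → Allowable g → Allowable (homG f g)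
  | comp {T S R : Shape} {f : KMGraph T S} {g : KMGraph S R} {h : KMGraph T R} :
      Allowable f → Allowable g → IsComposite f g h → Allowable h

/-! ### Trees -/

/-- The data of a (combed) tree with `k` ordered nodes of arities `m 0, …, m (k-1)` and
`l` leaves: a bijection from node-inputs plus a root marker to node-outputs plus leaf markers. -/
abbrev TreeBij (k : ℕ) (m : Fin k → ℕ) (l : ℕ) : Type :=
  ((Σ i : Fin k, Fin (m i)) ⊕ Unit) ≃ (Fin k ⊕ Fin l)

/-- The loop condition: a nonempty cyclic sequence of node indices `t 0, …, t n` such that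
the `b j`-th input of node `t j` is attached to the output of node `t (j-1)` (cyclically). -/
def HasLoop {k : ℕ} {m : Fin k → ℕ} {l : ℕ} (α : TreeBij k m l) : Prop :=
  ∃ (n : ℕ) (t : Fin (n + 1) → Fin k) (b : (j : Fin (n + 1)) → Fin (m (t j))),
    ∀ j, α (Sum.inl ⟨t j, b j⟩) = Sum.inl (t (j - 1))

/-- A closed loop in the graph defined by `α` on the nodes `N_1, …, N_k`:
a closed walk along pairwise distinct edges.  An edge is a node input together with the node
output it is attached to under `α`; its endpoints are the two nodes involved. -/
def HasClosedLoop {k : ℕ} {m : Fin k → ℕ} {l : ℕ} (α : TreeBij k m l) : Prop :=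
  ∃ (n : ℕ) (v : Fin (n + 1) → Fin k) (e : Fin (n + 1) → Σ i : Fin k, Fin (m i)),
    Function.Injective e ∧
    ∀ j, ((e j).1 = v j ∧ α (Sum.inl (e j)) = Sum.inl (v (j + 1))) ∨
         ((e j).1 = v (j + 1) ∧ α (Sum.inl (e j)) = Sum.inl (v j))

/-! ### Trees as morphisms in K1 -/

/-- `X_{m 0} ⊗ ⋯ ⊗ X_{m (k-1)}` (associated to the right, with empty tensor `I`). -/
def domShape : (k : ℕ) → (Fin k → ℕ) → Shape
  | 0, _ => .unit
  | k + 1, m => .tensor (Xm (m 0)) (domShape k (fun i => m i.succ))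

/-- The `j`-th variable of `1^{⊗m}`. -/
def powVar : (m : ℕ) → Fin m → VarsOf (onePow m)
  | 0, j => j.elim0
  | m + 1, j => Fin.lastCases (Sum.inr ()) (fun i => Sum.inl (powVar m i)) j

/-- The variable of `X_{m 0} ⊗ ⋯ ⊗ X_{m (k-1)}` corresponding to the `j`-th input of the
`i`-th node. -/
def inputVar : (k : ℕ) → (m : Fin k → ℕ) → (i : Fin k) → Fin (m i) → VarsOf (domShape k m)
  | 0, _, i, _ => i.elim0
  | k + 1, m, i, j =>
    Fin.cases (motive := fun i => Fin (m i) → VarsOf (domShape (k + 1) m))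
      (fun j => Sum.inl (Sum.inl (powVar (m 0) j)))
      (fun i' j => Sum.inr (inputVar k (fun t => m t.succ) i' j)) i j

/-- The variable of `X_{m 0} ⊗ ⋯ ⊗ X_{m (k-1)}` corresponding to the output of the
`i`-th node. -/
def outputVar : (k : ℕ) → (m : Fin k → ℕ) → Fin k → VarsOf (domShape k m)
  | 0, _, i => i.elim0
  | k + 1, m, i =>
    Fin.cases (motive := fun _ => VarsOf (domShape (k + 1) m))
      (Sum.inl (Sum.inr ()))
      (fun i' => Sum.inr (outputVar k (fun t => m t.succ) i')) i

/-- The variable of `X_l` corresponding to the `p`-th leaf. -/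
def leafVar (l : ℕ) (p : Fin l) : VarsOf (Xm l) := Sum.inl (powVar l p)

/-- The variable of `X_l` corresponding to the root. -/
def rootVar (l : ℕ) : VarsOf (Xm l) := Sum.inr ()

/-- Node inputs and the root marker, as variables of the graph
`X_{m 0} ⊗ ⋯ ⊗ X_{m (k-1)} → X_l`. -/
def srcv (k : ℕ) (m : Fin k → ℕ) (l : ℕ) :
    ((Σ i : Fin k, Fin (m i)) ⊕ Unit) → VarsOf (domShape k m) ⊕ VarsOf (Xm l) :=
  Sum.elim (fun x => Sum.inl (inputVar k m x.1 x.2)) (fun _ => Sum.inr (rootVar l))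

/-- Node outputs and leaf markers, as variables of the graph
`X_{m 0} ⊗ ⋯ ⊗ X_{m (k-1)} → X_l`. -/
def targ (k : ℕ) (m : Fin k → ℕ) (l : ℕ) :
    (Fin k ⊕ Fin l) → VarsOf (domShape k m) ⊕ VarsOf (Xm l) :=
  Sum.elim (fun r => Sum.inl (outputVar k m r)) (fun p => Sum.inr (leafVar l p))

/-- The graph `ξ : X_{m 0} ⊗ ⋯ ⊗ X_{m (k-1)} → X_l` represents the tree (bijection) `α`:
its pairing sends each node input (resp. the root marker) exactly where `α` does. -/
def Represents {k : ℕ} {m : Fin k → ℕ} {l : ℕ}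
    (ξ : KMGraph (domShape k m) (Xm l)) (α : TreeBij k m l) : Prop :=
  ∀ x, ξ.mate (srcv k m l x) = targ k m l (α x)

/-- Dual form: the graph `ξ : I → [X_{m 0} ⊗ ⋯ ⊗ X_{m (k-1)}, X_l]` represents the tree `α`. -/
def Represents' {k : ℕ} {m : Fin k → ℕ} {l : ℕ}
    (ξ : KMGraph .unit (.hom (domShape k m) (Xm l))) (α : TreeBij k m l) : Prop :=
  ∀ x, ξ.mate (Sum.inr (srcv k m l x)) = Sum.inr (targ k m l (α x))



private lemma iter_mod {β : Type*} (σ : β → β) (x : β) (p : ℕ) (hper : σ^[p] x = x)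
    (c : ℕ) : σ^[c] x = σ^[c % p] x := by
  conv_lhs => rw [← Nat.div_add_mod c p]
  generalize c / p = q
  induction q with
  | zero => simp
  | succ q ih =>
    have h : p * (q + 1) + c % p = (p * q + c % p) + p := by ring
    rw [h, Function.iterate_add_apply, hper, ih]

private lemma loop_aux {k l : ℕ} {m : Fin k → ℕ} (α : TreeBij k m l) :
    ∀ n (t : Fin (n + 1) → Fin k) (b : (j : Fin (n + 1)) → Fin (m (t j))),
      (∀ j, α (Sum.inl ⟨t j, b j⟩) = Sum.inl (t (j - 1))) → HasClosedLoop α := by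
  intro n
  induction n using Nat.strong_induction_on with
  | _ n ih =>
    intro t b hyp
    by_cases hE : Function.Injective (fun j : Fin (n + 1) => (⟨t j, b j⟩ : Σ i, Fin (m i)))
    · refine ⟨n, fun j => t (j - 1), fun j => ⟨t j, b j⟩, hE, fun j => Or.inr ⟨?_, ?_⟩⟩
      · show t j = t (j + 1 - 1); rw [add_sub_cancel_right]
      · exact hyp j
    · rw [Function.not_injective_iff] at hE
      obtain ⟨j, j', hEq, hne⟩ := hE
      have main : ∀ (a a' : Fin (n + 1)), a.val < a'.val →
          (⟨t a, b a⟩ : Σ i, Fin (m i)) = ⟨t a', b a'⟩ → HasClosedLoop α := by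
        intro a a' hlt hEq
        have hle : a'.val ≤ n := by omega
        set p := a'.val - a.val with hpdef
        have hp1 : 1 ≤ p := by omega
        have hbound : ∀ a0 : Fin (p - 1 + 1), a.val + 1 + a0.val < n + 1 := by
          intro a0; have := a0.isLt; omega
        refine ih (p - 1) (by omega)
          (fun a0 => t ⟨a.val + 1 + a0.val, hbound a0⟩)
          (fun a0 => b ⟨a.val + 1 + a0.val, hbound a0⟩) ?_
        intro a0
        set i : Fin (n + 1) := ⟨a.val + 1 + a0.val, hbound a0⟩ with hidef
        have h1 : α (Sum.inl ⟨t i, b i⟩) = Sum.inl (t (i - 1)) := hyp i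
        have hi0 : i ≠ 0 := by
          intro h; have := congrArg Fin.val h; simp [hidef] at this
        have hiv : (i - 1).val = a.val + a0.val := by
          rw [Fin.coe_sub_one, if_neg hi0]
          show a.val + 1 + a0.val - 1 = a.val + a0.val
          omega
        refine h1.trans ?_
        congr 1
        by_cases h0 : a0 = 0
        · subst h0
          have hv1 : ((0 : Fin (p - 1 + 1)) - 1).val = p - 1 := by
            rw [Fin.coe_sub_one, if_pos rfl]
          have hta : t (i - 1) = t a := by
            congr 1; apply Fin.ext; simpa using hiv
          have htaa' : t a = t a' := congrArg Sigma.fst hEq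
          rw [hta, htaa']
          congr 1; apply Fin.ext
          simp only [hv1]; omega
        · have ha0 : a0.val ≠ 0 := fun h => h0 (Fin.ext h)
          have hv1 : (a0 - 1).val = a0.val - 1 := by
            rw [Fin.coe_sub_one, if_neg h0]
          congr 1; apply Fin.ext
          simp only [hiv, hv1]; omega
      rcases Nat.lt_or_ge j.val j'.val with h | h
      · exact main j j' h hEq
      · have h2 : j'.val < j.val := by
          rcases Nat.lt_or_ge j'.val j.val with h2 | h2
          · exact h2
          · exact absurd (Fin.ext (le_antisymm h h2)) (fun hh => hne (hh ▸ rfl))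
        exact main j' j h2 hEq.symm

/-- the graph on the nodes `N_1, …, N_k` defined by a bijection `α` contains a
closed loop if and only if there is a nonempty cyclic sequence of indices `t` with
`α (x_{t_j, b_j}) = x_{t_{j-1}}` (cyclically). -/
theorem closed_loop_iff (k l : ℕ) (m : Fin k → ℕ) (α : TreeBij k m l) :
    HasClosedLoop α ↔ HasLoop α := by
  constructor
  · rintro ⟨n, v, e, einj, hyp⟩
    have hα : ∀ j : Fin (n + 1), ∃ w, α (Sum.inl (e j)) = Sum.inl w ∧
        (w = v j ∨ w = v (j + 1)) ∧ ((e j).1 = v j ∨ (e j).1 = v (j + 1)) := by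
      intro j
      rcases hyp j with ⟨h1, h2⟩ | ⟨h1, h2⟩
      · exact ⟨v (j + 1), h2, Or.inr rfl, Or.inl h1⟩
      · exact ⟨v j, h2, Or.inl rfl, Or.inr h1⟩
    choose tl htl htlv hhdv using hα
    have tlinj : Function.Injective tl := by
      intro a c hac
      apply einj
      have h1 : α (Sum.inl (e a)) = α (Sum.inl (e c)) := by
        rw [htl a, htl c, hac]
      exact Sum.inl_injective (α.injective h1)
    have himg : Finset.image tl Finset.univ = Finset.image v Finset.univ := by
      apply Finset.eq_of_subset_of_card_le
      · intro x hx
        simp only [Finset.mem_image, Finset.mem_univ, true_and] at hx ⊢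
        obtain ⟨a, ha⟩ := hx
        rcases htlv a with h | h
        · exact ⟨a, by rw [← h, ha]⟩
        · exact ⟨a + 1, by rw [← h, ha]⟩
      · have h1 : (Finset.image v Finset.univ).card ≤ Finset.univ.card :=
          Finset.card_image_le
        have h2 : (Finset.image tl Finset.univ).card = Finset.univ.card :=
          Finset.card_image_of_injective _ tlinj
        omega
    have hmem : ∀ j : Fin (n + 1), ∃ j', tl j' = (e j).1 := by
      intro j
      have hx : (e j).1 ∈ Finset.image v Finset.univ := by
        simp only [Finset.mem_image, Finset.mem_univ, true_and]
        rcases hhdv j with h | h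
        · exact ⟨j, h.symm⟩
        · exact ⟨j + 1, h.symm⟩
      rw [← himg] at hx
      simpa using hx
    choose σ hσ using hmem
    obtain ⟨a, c, hne, hac⟩ := Fintype.exists_ne_map_eq_of_card_lt
      (fun a : Fin (n + 2) => σ^[a.val] 0) (by simp)
    have main : ∀ (x : Fin (n + 1)) (p : ℕ), 0 < p → σ^[p] x = x → HasLoop α := by
      intro x p hp hper
      obtain ⟨N, rfl⟩ : ∃ N, p = N + 1 := ⟨p - 1, by omega⟩
      refine ⟨N, fun j => (e (σ^[j.val] x)).1, fun j => (e (σ^[j.val] x)).2, ?_⟩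
      intro j
      have h1 : (Sum.inl (⟨(e (σ^[j.val] x)).1, (e (σ^[j.val] x)).2⟩ : Σ i, Fin (m i))
          : (Σ i, Fin (m i)) ⊕ Unit) = Sum.inl (e (σ^[j.val] x)) := rfl
      rw [h1, htl]
      congr 1
      have h2 : (e (σ^[(j - 1).val] x)).1 = tl (σ^[(j - 1).val + 1] x) := by
        rw [Function.iterate_succ_apply', hσ]
      show tl (σ^[j.val] x) = (e (σ^[(j - 1).val] x)).1
      rw [h2]
      congr 1
      by_cases h0 : j = 0
      · subst h0
        have : ((0 : Fin (N + 1)) - 1).val = N := by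
          rw [Fin.coe_sub_one, if_pos rfl]
        rw [this]
        show σ^[0] x = σ^[N + 1] x
        rw [hper]; rfl
      · have hj : j.val ≠ 0 := fun h => h0 (Fin.ext h)
        have : (j - 1).val = j.val - 1 := by rw [Fin.coe_sub_one, if_neg h0]
        rw [this]
        congr 1
        omega
    rcases Nat.lt_or_ge a.val c.val with h | h
    · exact main (σ^[a.val] 0) (c.val - a.val) (by
        have : a.val ≠ c.val := fun hh => hne (Fin.ext hh)
        omega) (by
        rw [← Function.iterate_add_apply]
        rw [show c.val - a.val + a.val = c.val by omega, hac])
    · have h2 : c.val < a.val := by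
        have : a.val ≠ c.val := fun hh => hne (Fin.ext hh)
        omega
      exact main (σ^[c.val] 0) (a.val - c.val) (by omega) (by
        rw [← Function.iterate_add_apply]
        rw [show a.val - c.val + c.val = a.val by omega, ← hac])
  · rintro ⟨n, t, b, hyp⟩
    exact loop_aux α n t b hyp

end KM
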